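/- Let m ≥ 3 be odd, and let q ≥ 3 be a prime power, n = (q^m - 1)/(q - 1). The smallest positive integer a with q ∤ a that is not the coset leader of its q-cyclotomic coset modulo n is a = (q^{(m+1)/2} - 1)/(q - 1) + 1. -/

import Mathlib

/-- The q-cyclotomic coset of a modulo n: {a * q^j mod n : j ≥ 0}. -/
def cyclCoset (q n a : ℕ) : Finset ℕ :=
  (Finset.range n).image (fun j => a * q ^ j % n)

/-- a is the coset leader (smallest element) of its q-cyclotomic coset modulo n. -/
def IsCosetLeader (q n a : ℕ) : Prop :=
  ∀ j : ℕ, a ≤ a * q ^ j % n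

private lemma pow_mod_cycle (q m j M : ℕ) (h : q ^ m % M = 1 % M) :
    q ^ j % M = q ^ (j % m) % M := by
  conv_lhs => rw [← Nat.div_add_mod j m]
  rw [pow_add, pow_mul, Nat.mul_mod, Nat.pow_mod, h, ← Nat.pow_mod, one_pow,
    ← Nat.mul_mod, one_mul]

private lemma pow_mul3_le (q s e : ℕ) (hq : 3 ≤ q) (hse : s + 1 ≤ e) :
    q ^ s * 3 ≤ q ^ e := by
  calc q ^ s * 3 ≤ q ^ s * q := Nat.mul_le_mul_left _ hq
  _ = q ^ (s + 1) := (pow_succ q s).symm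
  _ ≤ q ^ e := Nat.pow_le_pow_right (by omega) hse

/-- Core: if `0 < b < q^t`, `q ∤ b`, then all "shifts" of `b` mod `q^(2t-1)-1` are ≥ b. -/
private lemma core_shift (q t b r : ℕ) (hq : 3 ≤ q) (ht : 2 ≤ t) (hb0 : 0 < b)
    (hbt : b < q ^ t) (hbq : ¬ q ∣ b) (hr : r < 2 * t - 1) :
    b ≤ b * q ^ r % (q ^ (2 * t - 1) - 1) := by
  have hq0 : 0 < q := by omega
  set m := 2 * t - 1 with hm
  have htm : t + 1 ≤ m := by omega
  have hqm1 : 1 ≤ q ^ m := Nat.one_le_pow _ _ hq0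
  by_cases hcase : r + t ≤ m
  · -- small shift: no wraparound
    have h1 : b * q ^ r < q ^ m - 1 := by
      rcases Nat.eq_zero_or_pos r with hr0 | hr0
      · subst hr0
        have h2 : q ^ t * 3 ≤ q ^ m := pow_mul3_le q t m hq htm
        have h3 : 1 ≤ q ^ t := Nat.one_le_pow _ _ hq0
        simpa using by omega
      · have h2 : b * q ^ r + q ^ r ≤ q ^ (t + r) := by
          calc b * q ^ r + q ^ r = (b + 1) * q ^ r := by ring
          _ ≤ q ^ t * q ^ r := Nat.mul_le_mul_right _ (by omega)
          _ = q ^ (t + r) := (pow_add q t r).symm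
        have h5 : q ^ (t + r) ≤ q ^ m := Nat.pow_le_pow_right hq0 (by omega)
        have h6 : 3 ≤ q ^ r := by
          calc (3 : ℕ) ≤ q := hq
          _ = q ^ 1 := (pow_one q).symm
          _ ≤ q ^ r := Nat.pow_le_pow_right hq0 hr0
        omega
    rw [Nat.mod_eq_of_lt h1]
    exact Nat.le_mul_of_pos_right b (Nat.pow_pos (n := r) hq0)
  · -- wraparound case
    set i := m - r with hidef
    have hi1 : 1 ≤ i := by omega
    have hit : i ≤ t - 1 := by omega
    set u := b / q ^ i with hu
    set v := b % q ^ i with hv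
    have hbuv : q ^ i * u + v = b := Nat.div_add_mod b (q ^ i)
    have hv0 : 0 < v := by
      rcases Nat.eq_zero_or_pos v with h | h
      · exact absurd (dvd_trans (dvd_pow_self q (by omega)) (Nat.dvd_of_mod_eq_zero h))
          hbq
      · exact h
    have hvlt : v < q ^ i := Nat.mod_lt _ (Nat.pow_pos (n := i) hq0)
    have hii : q ^ i * q ^ (m - i) = q ^ m := by rw [← pow_add]; congr 1; omega
    have hult : u < q ^ (t - i) := by
      rw [hu, Nat.div_lt_iff_lt_mul (Nat.pow_pos (n := i) hq0)]
      have h : q ^ (t - i) * q ^ i = q ^ t := by rw [← pow_add]; congr 1; omega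
      rw [h]; exact hbt
    have hexp : q ^ r = q ^ (m - i) := by congr 1; omega
    have hmul : u * (q ^ m - 1) + u = u * q ^ m := by
      rw [← Nat.mul_succ]; congr 1; omega
    have key : b * q ^ r = u * (q ^ m - 1) + (u + v * q ^ (m - i)) := by
      have c1 : b * q ^ r = u * q ^ m + v * q ^ (m - i) := by
        calc b * q ^ r = (q ^ i * u + v) * q ^ (m - i) := by rw [hbuv, hexp]
        _ = u * (q ^ i * q ^ (m - i)) + v * q ^ (m - i) := by ring
        _ = u * q ^ m + v * q ^ (m - i) := by rw [hii]
      omega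
    have hvB : v * q ^ (m - i) + q ^ (m - i) ≤ q ^ m := by
      calc v * q ^ (m - i) + q ^ (m - i) = (v + 1) * q ^ (m - i) := by ring
      _ ≤ q ^ i * q ^ (m - i) := Nat.mul_le_mul_right _ (by omega)
      _ = q ^ m := hii
    have h3 : q ^ (t - i) * 3 ≤ q ^ (m - i) := pow_mul3_le q (t - i) (m - i) hq (by omega)
    have h4 : 1 ≤ q ^ (t - i) := Nat.one_le_pow _ _ hq0
    have hw_lt : u + v * q ^ (m - i) < q ^ m - 1 := by omega
    have hmod : b * q ^ r % (q ^ m - 1) = u + v * q ^ (m - i) := by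
      rw [key, mul_comm u (q ^ m - 1), Nat.mul_add_mod, Nat.mod_eq_of_lt hw_lt]
    have hbig : q ^ t ≤ q ^ (m - i) := Nat.pow_le_pow_right hq0 (by omega)
    rw [hmod]
    calc b ≤ q ^ (m - i) := le_trans (le_of_lt hbt) hbig
    _ ≤ v * q ^ (m - i) := Nat.le_mul_of_pos_left _ hv0
    _ ≤ u + v * q ^ (m - i) := Nat.le_add_left _ _

/-- Any a with 0 < a ≤ (q^t-1)/(q-1), q ∤ a, is a coset leader mod (q^(2t-1)-1)/(q-1). -/
private lemma leader (q t a : ℕ) (hq : 3 ≤ q) (ht : 2 ≤ t) (ha0 : 0 < a)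
    (ha : a ≤ (q ^ t - 1) / (q - 1)) (haq : ¬ q ∣ a) :
    IsCosetLeader q ((q ^ (2 * t - 1) - 1) / (q - 1)) a := by
  intro j
  set m := 2 * t - 1 with hm
  have hq0 : 0 < q := by omega
  have hdvd : (q - 1) ∣ (q ^ m - 1) := by simpa using Nat.sub_dvd_pow_sub_pow q 1 m
  have hdvdt : (q - 1) ∣ (q ^ t - 1) := by simpa using Nat.sub_dvd_pow_sub_pow q 1 t
  have hn : (q - 1) * ((q ^ m - 1) / (q - 1)) = q ^ m - 1 := Nat.mul_div_cancel' hdvd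
  set n := (q ^ m - 1) / (q - 1) with hndef
  set b := (q - 1) * a with hbdef
  have hb0 : 0 < b := Nat.mul_pos (by omega) ha0
  have hbt : b < q ^ t := by
    have h1 : (q - 1) * ((q ^ t - 1) / (q - 1)) = q ^ t - 1 := Nat.mul_div_cancel' hdvdt
    have h2 : b ≤ (q - 1) * ((q ^ t - 1) / (q - 1)) := Nat.mul_le_mul_left _ ha
    have h3 : 1 ≤ q ^ t := Nat.one_le_pow _ _ hq0
    omega
  have hbq : ¬ q ∣ b := by
    intro hd
    apply haq
    have h1 : q * a - (q - 1) * a = a := by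
      have h0 : (q - (q - 1)) * a = q * a - (q - 1) * a := Nat.sub_mul _ _ _
      have h2 : q - (q - 1) = 1 := by omega
      rw [h2, one_mul] at h0; omega
    have h2 := Nat.dvd_sub (Dvd.intro a rfl) hd
    rwa [h1] at h2
  have hcore := core_shift q t b (j % m) hq ht hb0 hbt hbq (Nat.mod_lt _ (by omega))
  have hqm1 : 1 ≤ q ^ m := Nat.one_le_pow _ _ hq0
  have hMmod : q ^ m % (q ^ m - 1) = 1 % (q ^ m - 1) := by
    have h : q ^ m = (q ^ m - 1) + 1 := by omega
    nth_rewrite 1 [h]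
    rw [Nat.add_mod_left]
  have hshift : b * q ^ j % (q ^ m - 1) = b * q ^ (j % m) % (q ^ m - 1) := by
    rw [Nat.mul_mod, pow_mod_cycle q m j _ hMmod, ← Nat.mul_mod]
  have htr : b * q ^ j % (q ^ m - 1) = (q - 1) * (a * q ^ j % n) := by
    conv_lhs => rw [hbdef, mul_assoc, ← hn, Nat.mul_mod_mul_left]
  have hfin : (q - 1) * a ≤ (q - 1) * (a * q ^ j % n) := by
    rw [← htr, hshift]; exact hcore
  exact Nat.le_of_mul_le_mul_left hfin (by omega)

/-- The candidate is a member of the set. -/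
private lemma mem_part (q t : ℕ) (hq : 3 ≤ q) (ht : 2 ≤ t) :
    0 < (q ^ t - 1) / (q - 1) + 1 ∧ ¬ q ∣ ((q ^ t - 1) / (q - 1) + 1) ∧
      ¬ IsCosetLeader q ((q ^ (2 * t - 1) - 1) / (q - 1)) ((q ^ t - 1) / (q - 1) + 1) := by
  have hq0 : 0 < q := by omega
  have hdvd : (q - 1) ∣ (q ^ (2 * t - 1) - 1) := by
    simpa using Nat.sub_dvd_pow_sub_pow q 1 (2 * t - 1)
  have hdvdt : (q - 1) ∣ (q ^ t - 1) := by simpa using Nat.sub_dvd_pow_sub_pow q 1 t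
  have hqt1 : 1 ≤ q ^ t := Nat.one_le_pow _ _ hq0
  have hqm1 : 1 ≤ q ^ (2 * t - 1) := Nat.one_le_pow _ _ hq0
  have hNt : (q - 1) * ((q ^ t - 1) / (q - 1)) = q ^ t - 1 := Nat.mul_div_cancel' hdvdt
  have hn : (q - 1) * ((q ^ (2 * t - 1) - 1) / (q - 1)) = q ^ (2 * t - 1) - 1 :=
    Nat.mul_div_cancel' hdvd
  have hb₀ : (q - 1) * ((q ^ t - 1) / (q - 1) + 1) = q ^ t + q - 2 := by
    rw [Nat.mul_add, hNt, mul_one]; omega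
  refine ⟨Nat.succ_pos _, ?_, ?_⟩
  · intro hd
    have h1 : q ∣ (q - 1) * ((q ^ t - 1) / (q - 1) + 1) := Dvd.dvd.mul_left hd _
    rw [hb₀] at h1
    have h2 : q ∣ q ^ t := dvd_pow_self q (by omega)
    have h3 : q ∣ q ^ t + q := Nat.dvd_add h2 dvd_rfl
    have h4 := Nat.dvd_sub h3 h1
    have h5 : q ^ t + q - (q ^ t + q - 2) = 2 := by omega
    rw [h5] at h4
    have := Nat.le_of_dvd (by norm_num) h4
    omega
  · intro hL
    have h := hL (t - 1)
    have hmul := Nat.mul_le_mul_left (q - 1) h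
    have hQP : q ^ t * q ^ (t - 1) = q ^ (2 * t - 1) := by rw [← pow_add]; congr 1; omega
    have hP3 : 3 ≤ q ^ (t - 1) := by
      calc (3 : ℕ) ≤ q := hq
      _ = q ^ 1 := (pow_one q).symm
      _ ≤ q ^ (t - 1) := Nat.pow_le_pow_right hq0 (by omega)
    have hX : (q - 2) * q ^ (t - 1) + 2 * q ^ (t - 1) = q ^ t := by
      have h9 : q - 2 + 2 = q := by omega
      calc (q - 2) * q ^ (t - 1) + 2 * q ^ (t - 1) = (q - 2 + 2) * q ^ (t - 1) :=
        (Nat.add_mul _ _ _).symm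
      _ = q * q ^ (t - 1) := by rw [h9]
      _ = q ^ (t - 1 + 1) := (pow_succ' q (t - 1)).symm
      _ = q ^ t := by congr 1; omega
    have hQ3 : q ^ t * 3 ≤ q ^ (2 * t - 1) := by
      calc q ^ t * 3 ≤ q ^ t * q ^ (t - 1) := Nat.mul_le_mul_left _ hP3
      _ = q ^ (2 * t - 1) := hQP
    have hw_lt : 1 + (q - 2) * q ^ (t - 1) < q ^ (2 * t - 1) - 1 := by omega
    have hkey : ((q - 1) * ((q ^ t - 1) / (q - 1) + 1)) * q ^ (t - 1) =
        (q ^ (2 * t - 1) - 1) + (1 + (q - 2) * q ^ (t - 1)) := by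
      rw [hb₀]
      have h9 : q ^ t + q - 2 = q ^ t + (q - 2) := by omega
      rw [h9, Nat.add_mul, hQP]
      omega
    have hmod : ((q - 1) * ((q ^ t - 1) / (q - 1) + 1)) * q ^ (t - 1) %
        (q ^ (2 * t - 1) - 1) = 1 + (q - 2) * q ^ (t - 1) := by
      rw [hkey, Nat.add_mod_left, Nat.mod_eq_of_lt hw_lt]
    have htr : ((q - 1) * ((q ^ t - 1) / (q - 1) + 1)) * q ^ (t - 1) %
        (q ^ (2 * t - 1) - 1) =
        (q - 1) * (((q ^ t - 1) / (q - 1) + 1) * q ^ (t - 1) %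
          ((q ^ (2 * t - 1) - 1) / (q - 1))) := by
      conv_lhs => rw [mul_assoc, ← hn, Nat.mul_mod_mul_left]
    rw [← htr, hmod, hb₀] at hmul
    omega

theorem stmt_15 (q m : ℕ) (hq : IsPrimePow q) (hq3 : 3 ≤ q) (hm : Odd m) (hm3 : 3 ≤ m) :
    IsLeast {a : ℕ | 0 < a ∧ ¬ q ∣ a ∧ ¬ IsCosetLeader q ((q ^ m - 1) / (q - 1)) a}
      ((q ^ ((m + 1) / 2) - 1) / (q - 1) + 1) := by
  obtain ⟨k, hk⟩ := hm
  have h1 : (m + 1) / 2 = k + 1 := by omega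
  have h2 : m = 2 * (k + 1) - 1 := by omega
  rw [h1, h2]
  have hk2 : 2 ≤ k + 1 := by omega
  constructor
  · exact mem_part q (k + 1) hq3 hk2
  · rintro a ⟨ha0, haq, hnl⟩
    by_contra hlt
    push_neg at hlt
    exact hnl (leader q (k + 1) a hq3 hk2 ha0 (by omega) haq)
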